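/- Reflexivity of the similarity relation may fail across a pair of structures: there exist L-structures A and B with the same domain and an element a of that domain such that (A,B) ⊨ a ≴ a. Concretely, with L having a single unary function symbol f, let A be the structure on ℕ with f interpreted as the successor n ↦ n+1, and let B be the structure on ℕ with f(1) = 0, f(0) = 2, and f(n) = n+1 for n ≥ 2; then c-Type_{(A,B)}(1 ≲ 1) is strictly contained in c-Type_{(A,B)}(1 ≲ 0), hence (A,B) ⊨ 1 ≴ 1. -/

import Mathlib

open FirstOrder FirstOrder.Language

universe u v w x

namespace Similarity

variable {L : FirstOrder.Language.{u, v}}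

/-- An `L`-formula in one designated free variable `y` is *conjunctive* iff it is built from
literals (equalities, disequalities, relation atoms and negated relation atoms) using only
conjunction and the quantifiers `∀` and `∃`; in particular it contains no disjunctions and
negation occurs only directly in front of atomic formulas. -/
inductive IsConjunctive : ∀ {n : ℕ}, L.BoundedFormula (Fin 1) n → Prop
  | equal {n} (t u : L.Term (Fin 1 ⊕ Fin n)) : IsConjunctive (BoundedFormula.equal t u)
  | nequal {n} (t u : L.Term (Fin 1 ⊕ Fin n)) : IsConjunctive (BoundedFormula.equal t u).not
  | rel {n l} (R : L.Relations l) (ts : Fin l → L.Term (Fin 1 ⊕ Fin n)) :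
      IsConjunctive (BoundedFormula.rel R ts)
  | nrel {n l} (R : L.Relations l) (ts : Fin l → L.Term (Fin 1 ⊕ Fin n)) :
      IsConjunctive (BoundedFormula.rel R ts).not
  | inf {n} {φ ψ : L.BoundedFormula (Fin 1) n} :
      IsConjunctive φ → IsConjunctive ψ → IsConjunctive (φ ⊓ ψ)
  | all {n} {φ : L.BoundedFormula (Fin 1) (n + 1)} : IsConjunctive φ → IsConjunctive φ.all
  | ex {n} {φ : L.BoundedFormula (Fin 1) (n + 1)} : IsConjunctive φ → IsConjunctive φ.ex

/-- The conjunctive type `c-Type_A(a)` of an element `a` in an `L`-structure `A`: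
the set of conjunctive `L`-formulas `φ(y)` such that `A ⊨ φ(a)`. -/
def cType {M : Type w} (S : L.Structure M) (a : M) : Set (L.Formula (Fin 1)) :=
  { φ | IsConjunctive φ ∧ @Formula.Realize L M S (Fin 1) φ (fun _ => a) }

/-- The set of justifications `c-Type_{(A,B)}(a ≲ b) := c-Type_A(a) ∩ c-Type_B(b)`. -/
def Just {M : Type w} {N : Type x} (SA : L.Structure M) (SB : L.Structure N)
    (a : M) (b : N) : Set (L.Formula (Fin 1)) :=
  cType SA a ∩ cType SB b

/-- `(A,B) ⊨ a ≲ b` for structures `A`, `B` sharing the same domain `M` (so that `a` is an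
element of `B` and the exclusion clause applies): there is no `b' : M` with `b' ≠ a` such
that `c-Type_A(a) ∩ c-Type_B(b)` is strictly contained in `c-Type_A(a) ∩ c-Type_B(b')`. -/
def LesssimSame {M : Type w} (SA SB : L.Structure M) (a b : M) : Prop :=
  ¬ ∃ b' : M, b' ≠ a ∧ Just SA SB a b ⊂ Just SA SB a b'

/-- `(A,B) ⊨ a ≈ b` iff `(A,B) ⊨ a ≲ b` and `(B,A) ⊨ b ≲ a`, for structures sharing the
same domain. -/
def ApproxSame {M : Type w} (SA SB : L.Structure M) (a b : M) : Prop :=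
  LesssimSame SA SB a b ∧ LesssimSame SB SA b a

end Similarity

/-- The first-order language with a single unary function symbol `f`. -/
def L1 : FirstOrder.Language :=
  ⟨fun n => match n with | 1 => PUnit | _ => Empty, fun _ => Empty⟩

/-- `ℕ` as an `L1`-structure with `f` interpreted as the successor `n ↦ n + 1`. -/
def succStruct : L1.Structure ℕ where
  funMap {n} f xs := match n, f with | 1, _ => xs 0 + 1
  RelMap {n} r _ := r.elim

/-- `ℕ` as an `L1`-structure with `f 1 = 0`, `f 0 = 2`, and `f n = n + 1` for `n ≥ 2`. -/
def swapStruct : L1.Structure ℕ where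
  funMap {n} f xs :=
    match n, f with
    | 1, _ => match xs 0 with
      | 0 => 2
      | 1 => 0
      | (m + 2) => m + 3
  RelMap {n} r _ := r.elim


/-- A copy of `ℕ` to carry the `swapStruct` structure as an instance. -/
def Nswap : Type := ℕ

/-- the single unary function symbol of `L1` -/
def fSym : L1.Functions 1 := PUnit.unit

/-- the formula `∃ x, f x = y` -/
def exPred : L1.Formula (Fin 1) :=
  BoundedFormula.ex (BoundedFormula.equal
    (Term.func fSym (fun _ => Term.var (Sum.inr 0)))
    (Term.var (Sum.inl 0)))

section LocalInstances

local instance instSucc : L1.Structure ℕ := succStruct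
local instance instSwap : L1.Structure Nswap := swapStruct

set_option linter.unusedVariables false in
/-- `Equiv.swap 0 1` as an isomorphism from `succStruct` to `swapStruct`. -/
def swapIso : ℕ ≃[L1] Nswap where
  toEquiv := (Equiv.swap 0 1 : ℕ ≃ ℕ)
  map_fun' := by
    intro n f x
    match n, f with
    | 1, _ =>
      show Equiv.swap 0 1 (x 0 + 1) = (match Equiv.swap 0 1 (x 0) with
        | 0 => 2 | 1 => 0 | (m+2) => m+3)
      rcases h : x 0 with _ | _ | m <;> simp [h, Equiv.swap_apply_def]
  map_rel' := by intro n r x; exact r.elim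

lemma swap_realize (φ : L1.Formula (Fin 1)) (v : Fin 1 → ℕ) :
    @FirstOrder.Language.Formula.Realize L1 ℕ swapStruct (Fin 1) φ
      (fun i => Equiv.swap 0 1 (v i)) ↔
    @FirstOrder.Language.Formula.Realize L1 ℕ succStruct (Fin 1) φ v :=
  StrongHomClass.realize_formula (M := ℕ) (N := Nswap) swapIso φ (v := v)

lemma exPred_succ_one :
    @FirstOrder.Language.Formula.Realize L1 ℕ succStruct (Fin 1) exPred (fun _ => 1) := by
  show Formula.Realize (M := ℕ) exPred (fun _ => 1)
  rw [exPred, Formula.Realize, BoundedFormula.realize_ex]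
  exact ⟨0, by simp [fSym, Term.realize, BoundedFormula.Realize, instSucc, succStruct, Fin.snoc]; rfl⟩

lemma exPred_swap_zero :
    @FirstOrder.Language.Formula.Realize L1 ℕ swapStruct (Fin 1) exPred (fun _ => 0) := by
  show Formula.Realize (M := Nswap) exPred (fun _ => (show Nswap from (0 : ℕ)))
  rw [exPred, Formula.Realize, BoundedFormula.realize_ex]
  refine ⟨(1 : ℕ), ?_⟩
  simp [fSym, Term.realize, BoundedFormula.Realize, instSwap, swapStruct,
    Fin.snoc]; rfl

lemma exPred_swap_one :
    ¬ @FirstOrder.Language.Formula.Realize L1 ℕ swapStruct (Fin 1) exPred (fun _ => 1) := by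
  show ¬ Formula.Realize (M := Nswap) exPred (fun _ => (show Nswap from (1 : ℕ)))
  rw [exPred, Formula.Realize, BoundedFormula.realize_ex]
  rintro ⟨x, hx⟩
  revert hx
  rcases x with _ | _ | m <;>
    simp [fSym, Term.realize, BoundedFormula.Realize, instSwap, swapStruct, Fin.snoc]
  · exact fun h => absurd (show (2 : ℕ) = 1 from h) (by decide)
  · exact fun h => absurd (show (0 : ℕ) = 1 from h) (by decide)
  · exact fun h => absurd (show (m + 3 : ℕ) = 1 from h) (by omega)

end LocalInstances

open Similarity in
/-- Reflexivity of the similarity relation may fail across a pair of structures: there are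
`L1`-structures `A`, `B` with the same domain and an element `a` of that domain with
`(A,B) ⊨ a ≴ a`. Concretely, for `A = (ℕ, succ)` and `B = (ℕ, f)` with `f 1 = 0`,
`f 0 = 2` and `f n = n + 1` for `n ≥ 2`, the justification set `c-Type_{(A,B)}(1 ≲ 1)` is
strictly contained in `c-Type_{(A,B)}(1 ≲ 0)`, hence `(A,B) ⊨ 1 ≴ 1`. -/
theorem similarity_refl_may_fail_in_pairs :
    (∃ (M : Type) (SA SB : L1.Structure M) (a : M), ¬ LesssimSame SA SB a a) ∧
      Just succStruct swapStruct (1 : ℕ) (1 : ℕ) ⊂ Just succStruct swapStruct (1 : ℕ) (0 : ℕ) ∧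
      ¬ LesssimSame succStruct swapStruct (1 : ℕ) (1 : ℕ) := by
  have hsub : Just succStruct swapStruct (1 : ℕ) (1 : ℕ) ⊂
      Just succStruct swapStruct (1 : ℕ) (0 : ℕ) := by
    constructor
    · rintro φ ⟨⟨hc, hA⟩, -⟩
      refine ⟨⟨hc, hA⟩, hc, ?_⟩
      have h := (swap_realize φ (fun _ => 1)).mpr hA
      simpa using h
    · intro hcon
      have hmem : exPred ∈ Just succStruct swapStruct (1 : ℕ) (0 : ℕ) := by
        exact ⟨⟨IsConjunctive.ex (IsConjunctive.equal _ _), exPred_succ_one⟩,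
          IsConjunctive.ex (IsConjunctive.equal _ _), exPred_swap_zero⟩
      have hnot : exPred ∉ Just succStruct swapStruct (1 : ℕ) (1 : ℕ) := by
        rintro ⟨-, -, hx⟩
        exact exPred_swap_one hx
      exact hnot (hcon hmem)
  refine ⟨⟨ℕ, succStruct, swapStruct, 1, fun h => h ⟨0, by norm_num, hsub⟩⟩, hsub,
    fun h => h ⟨0, by norm_num, hsub⟩⟩
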